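/- There exists a positive constant c_K (depending only on K and t) such that every principal divisor on the affine curve C is the divisor of a function ξ ∈ K satisfying ord_P(ξ) ≥ −deg(ξ)/[K : F_q(t)] − c_K for every infinite place P. Equivalently: for every nonzero f ∈ K there exists a unit u ∈ O_K^× such that ξ = uf satisfies the above bounds at all infinite places. -/

import Mathlib

/-!
STATEMENT 1.  Abstract setting: `K` is the function field, `P` the finite set of
infinite places (poles of `t`), `d p = [K_p : 𝔽_q((1/t))]` the local degrees with
`∑ d = n = [K : 𝔽_q(t)]`.  `ord f p` is the valuation of the nonzero function `f`
at the infinite place `p` (a group homomorphism in `f`), and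
`deg f := -∑_p d p · ord f p` is the degree of the pole divisor of `f` at infinity
(= degree of the finite part of the divisor of `f`).  `U = O_K^×` is the unit group;
units have divisor supported at infinity, and by the Dirichlet unit theorem the
valuation vectors of units span (over `ℚ`) the hyperplane `{y : ∑ d p · y p = 0}`,
which contains the vector `(ord f p + deg f / n)_p` for every `f` (product formula).
Conclusion: there is a constant `c_K > 0` such that every principal divisor is the
divisor of a function `ξ = u·f`, `u ∈ O_K^×`, with
`ord_p ξ ≥ - deg ξ / n - c_K` at every infinite place `p`.
-/
theorem stmt1 {K : Type*} [Field K] {P : Type*} [Fintype P] [Nonempty P]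
    (d : P → ℕ) (hd : ∀ p, 0 < d p)
    (n : ℕ) (hn : 0 < n) (hsum : (∑ p, d p) = n)
    (ord : Kˣ → (P → ℤ))             -- valuations at the infinite places
    (hord : ∀ f g : Kˣ, ord (f * g) = ord f + ord g)
    (deg : Kˣ → ℤ)
    (hdeg : ∀ f : Kˣ, deg f = -∑ p, (d p : ℤ) * ord f p)
    (U : Subgroup Kˣ)                -- the unit group O_K^×
    (hUdeg : ∀ u ∈ U, (∑ p, (d p : ℤ) * ord u p) = 0)  -- units have degree-0 divisor at ∞
    -- Dirichlet: the valuation vectors of units span the hyperplane ∑ d·y = 0 over ℚ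
    (hspan : ∀ y : P → ℚ, (∑ p, (d p : ℚ) * y p) = 0 →
      y ∈ Submodule.span ℚ ((fun u : U => fun p => ((ord u.1 p : ℤ) : ℚ)) '' Set.univ)) :
    ∃ c : ℚ, 0 < c ∧ ∀ f : Kˣ, ∃ u ∈ U,
      ∀ p : P, ((ord (u * f) p : ℤ) : ℚ) ≥ -((deg (u * f) : ℤ) : ℚ) / (n : ℚ) - c := by
  classical
  -- basic properties of ord
  have ord_one : ord 1 = 0 := by
    have h := hord 1 1
    rw [mul_one] at h
    have h2 : ord 1 + 0 = ord 1 + ord 1 := by rw [add_zero]; exact h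
    exact (add_left_cancel h2).symm
  have ord_inv : ∀ g : Kˣ, ord g⁻¹ = -ord g := by
    intro g
    have h := hord g g⁻¹
    rw [mul_inv_cancel, ord_one] at h
    exact eq_neg_of_add_eq_zero_right h.symm
  have ord_pow : ∀ (g : Kˣ) (m : ℕ), ord (g ^ m) = m • ord g := by
    intro g m
    induction m with
    | zero => simpa using ord_one
    | succ i ih => rw [pow_succ, hord, ih, succ_nsmul]
  have ord_zpow : ∀ (g : Kˣ) (k : ℤ), ord (g ^ k) = k • ord g := by
    intro g k
    induction k using Int.induction_on with
    | zero => simpa using ord_one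
    | succ i ih => rw [zpow_add_one, hord, ih, add_smul, one_smul]
    | pred i ih => rw [zpow_sub_one, hord, ih, ord_inv, sub_smul, one_smul, sub_eq_add_neg]
  have ord_prod : ∀ (s : Finset (P → ℚ)) (h : (P → ℚ) → Kˣ),
      ord (∏ v ∈ s, h v) = ∑ v ∈ s, ord (h v) := by
    intro s h
    induction s using Finset.cons_induction with
    | empty => simpa using ord_one
    | cons a s ha ih => rw [Finset.prod_cons, Finset.sum_cons, hord, ih]
  -- the set of unit valuation vectors
  set S : Set (P → ℚ) := ((fun u : U => fun p => ((ord u.1 p : ℤ) : ℚ)) '' Set.univ) with hS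
  obtain ⟨b, hbS, hbspan, hbind⟩ := exists_linearIndependent ℚ S
  have hbfin : b.Finite := hbind.finite
  set s : Finset (P → ℚ) := hbfin.toFinset with hs
  have hsS : ∀ v ∈ s, v ∈ S := by
    intro v hv
    exact hbS (hbfin.mem_toFinset.mp hv)
  have hsspan : Submodule.span ℚ (↑s : Set (P → ℚ)) = Submodule.span ℚ S := by
    rw [hbfin.coe_toFinset]; exact hbspan
  -- unit choices
  set g : (P → ℚ) → Kˣ := fun v =>
    if h : ∃ u : U, (fun p => ((ord (u : Kˣ) p : ℤ) : ℚ)) = v then (h.choose : Kˣ) else 1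
    with hg
  have hgU : ∀ v, g v ∈ U := by
    intro v
    by_cases h : ∃ u : U, (fun p => ((ord (u : Kˣ) p : ℤ) : ℚ)) = v
    · simp only [hg, dif_pos h]; exact h.choose.2
    · simp only [hg, dif_neg h]; exact U.one_mem
  have hgv : ∀ v ∈ s, ∀ p, ((ord (g v) p : ℤ) : ℚ) = v p := by
    intro v hv p
    have hvS : v ∈ S := hsS v hv
    obtain ⟨u, -, hu⟩ := hvS
    have hex : ∃ u : U, (fun p => ((ord (u : Kˣ) p : ℤ) : ℚ)) = v := ⟨u, hu⟩
    rw [hg]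
    simp only [dif_pos hex]
    exact congrFun hex.choose_spec p
  -- the constant
  set C : ℚ := ∑ v ∈ s, ∑ q, |v q| with hC
  have hC0 : 0 ≤ C := by positivity
  refine ⟨C + 1, by linarith, ?_⟩
  intro f
  have hnq : ((n : ℚ)) ≠ 0 := Nat.cast_ne_zero.mpr hn.ne'
  have hdsum : (∑ p, (d p : ℚ)) = (n : ℚ) := by exact_mod_cast hsum
  set D : ℚ := ((deg f : ℤ) : ℚ) / (n : ℚ) with hD
  set y : P → ℚ := fun p => ((ord f p : ℤ) : ℚ) + D with hy
  have hdq : ((deg f : ℤ) : ℚ) = -∑ p, (d p : ℚ) * ((ord f p : ℤ) : ℚ) := by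
    rw [hdeg]; push_cast; ring
  have hy0 : (∑ p, (d p : ℚ) * y p) = 0 := by
    simp only [hy, mul_add]
    rw [Finset.sum_add_distrib, ← Finset.sum_mul, hdsum, hD]
    rw [mul_div_cancel₀ _ hnq, hdq]
    ring
  have hyspan : y ∈ Submodule.span ℚ (↑s : Set (P → ℚ)) := by
    rw [hsspan]; exact hspan y hy0
  obtain ⟨coef, -, hcoef⟩ := Submodule.mem_span_finset.mp hyspan
  set m : (P → ℚ) → ℤ := fun v => ⌊coef v⌋ with hm
  set u0 : Kˣ := (∏ v ∈ s, g v ^ m v)⁻¹ with hu0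
  have hu0U : u0 ∈ U := by
    apply U.inv_mem
    exact Subgroup.prod_mem U fun v _ => Subgroup.zpow_mem U (hgU v) (m v)
  refine ⟨u0, hu0U, ?_⟩
  have hou : ord u0 = -(∑ v ∈ s, m v • ord (g v)) := by
    rw [hu0, ord_inv, ord_prod]
    congr 1
    exact Finset.sum_congr rfl fun v _ => ord_zpow _ _
  have hdequ : deg (u0 * f) = deg f := by
    rw [hdeg, hdeg, hord]
    have h0 := hUdeg u0 hu0U
    simp only [Pi.add_apply, mul_add]
    rw [Finset.sum_add_distrib, h0, zero_add]
  intro p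
  have hordq : ((ord u0 p : ℤ) : ℚ) = -∑ v ∈ s, (m v : ℚ) * v p := by
    rw [hou]
    push_cast [Finset.sum_apply, Pi.neg_apply, Pi.smul_apply, smul_eq_mul]
    congr 1
    exact Finset.sum_congr rfl fun v hv => by rw [hgv v hv p]
  have hyp : y p = ∑ v ∈ s, coef v * v p := by
    rw [← hcoef]
    simp [Finset.sum_apply]
  have hkey : ((ord (u0 * f) p : ℤ) : ℚ) = (∑ v ∈ s, (coef v - (m v : ℚ)) * v p) - D := by
    rw [hord]
    push_cast [Pi.add_apply]
    rw [hordq]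
    have : ((ord f p : ℤ) : ℚ) = y p - D := by rw [hy]; ring
    have hsplit : ∑ v ∈ s, (coef v - (m v : ℚ)) * v p
        = (∑ v ∈ s, coef v * v p) - ∑ v ∈ s, (m v : ℚ) * v p := by
      rw [← Finset.sum_sub_distrib]
      exact Finset.sum_congr rfl fun v _ => sub_mul _ _ _
    rw [this, hyp, hsplit]
    ring
  have hterm : ∀ v ∈ s, -|v p| ≤ (coef v - (m v : ℚ)) * v p := by
    intro v hv
    have h1 : 0 ≤ coef v - (m v : ℚ) := by
      rw [hm]; have := Int.floor_le (coef v); linarith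
    have h2 : coef v - (m v : ℚ) ≤ 1 := by
      rw [hm]; have := Int.lt_floor_add_one (coef v); linarith
    have h3 : |(coef v - (m v : ℚ)) * v p| ≤ |v p| := by
      rw [abs_mul]
      calc |coef v - (m v : ℚ)| * |v p| ≤ 1 * |v p| := by
            apply mul_le_mul_of_nonneg_right _ (abs_nonneg _)
            rw [abs_of_nonneg h1]; exact h2
        _ = |v p| := one_mul _
    have := neg_abs_le ((coef v - (m v : ℚ)) * v p)
    linarith
  have hsumbd : -C ≤ ∑ v ∈ s, (coef v - (m v : ℚ)) * v p := by
    have h1 : ∑ v ∈ s, -|v p| ≤ ∑ v ∈ s, (coef v - (m v : ℚ)) * v p :=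
      Finset.sum_le_sum hterm
    have h2 : -C ≤ ∑ v ∈ s, -|v p| := by
      rw [hC, ← Finset.sum_neg_distrib]
      apply Finset.sum_le_sum
      intro v _
      have : |v p| ≤ ∑ q, |v q| :=
        Finset.single_le_sum (f := fun q => |v q|) (fun q _ => abs_nonneg _) (Finset.mem_univ p)
      linarith
    linarith
  have hnd : -((deg f : ℤ) : ℚ) / (n : ℚ) = -D := by rw [hD, neg_div]
  rw [hkey, hdequ, hnd]
  linarith
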